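/- arXiv:1903.10799 — 2 statements merged into one kernel-verified Lean document; each statement's English description precedes it below -/
import Mathlib

section
/- Let f : ℝ → ℝ be 2π-periodic and continuously differentiable with ∫_{−π}^{π} f(t) dt = 0. Then sup_{x∈ℝ} |f(x)| ≤ (π/2)·sup_{x∈ℝ} |f′(x)|. Moreover, the constant π/2 cannot be replaced by any smaller constant: for every c < π/2 there exists such a function f with sup |f| > c·sup |f′|. -/
open Real MeasureTheory Metric Function Convolution

noncomputable section BohrFavardAux

lemma bf_habs : (∫ t in (-π)..π, |t|) = π ^ 2 := by
  have h1 : (∫ t in (-π)..(0:ℝ), |t|) = π ^ 2 / 2 := by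
    rw [show (∫ t in (-π)..(0:ℝ), |t|) = ∫ t in (-π)..(0:ℝ), -t from
      intervalIntegral.integral_congr fun x hx => by
        rw [Set.uIcc_of_le (by linarith [pi_pos] : -π ≤ (0:ℝ))] at hx
        exact abs_of_nonpos hx.2]
    rw [intervalIntegral.integral_neg, integral_id]
    ring
  have h2 : (∫ t in (0:ℝ)..π, |t|) = π ^ 2 / 2 := by
    rw [show (∫ t in (0:ℝ)..π, |t|) = ∫ t in (0:ℝ)..π, t from
      intervalIntegral.integral_congr fun x hx => by
        rw [Set.uIcc_of_le pi_pos.le] at hx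
        exact abs_of_nonneg hx.1]
    rw [integral_id]
    ring
  rw [← intervalIntegral.integral_add_adjacent_intervals (a := -π) (b := 0) (c := π)
    (continuous_abs.intervalIntegrable _ _) (continuous_abs.intervalIntegrable _ _), h1, h2]
  ring

lemma bf_bdd {g : ℝ → ℝ} (hper : Function.Periodic g (2 * π)) (hg : Continuous g) :
    ∃ C : ℝ, ∀ x, |g x| ≤ C := by
  obtain ⟨C, hC⟩ := (isCompact_Icc (a := (0:ℝ)) (b := 2 * π)).exists_bound_of_continuousOn
    hg.continuousOn
  refine ⟨C, fun x => ?_⟩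
  obtain ⟨y, hy, hxy⟩ := hper.exists_mem_Ico₀ (by positivity) x
  rw [hxy]
  exact hC y ⟨hy.1, hy.2.le⟩

lemma bf_key {f : ℝ → ℝ} (hper : Function.Periodic f (2 * π)) (hf : ContDiff ℝ 1 f)
    (hint : (∫ t in (-π)..π, f t) = 0) {M : ℝ} (hM0 : 0 ≤ M)
    (hM : ∀ x, |deriv f x| ≤ M) (x0 : ℝ) : f x0 ≤ π / 2 * M := by
  by_contra hx
  push_neg at hx
  have hdiff : Differentiable ℝ f := hf.differentiable one_ne_zero
  have hlip : LipschitzWith M.toNNReal f := by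
    apply lipschitzWith_of_nnnorm_deriv_le hdiff
    intro x
    rw [← NNReal.coe_le_coe, coe_nnnorm, Real.coe_toNNReal M hM0]
    exact hM x
  have hbound : ∀ t : ℝ, f x0 - M * |t| ≤ f (x0 + t) := by
    intro t
    have h1 := hlip.dist_le_mul (x0 + t) x0
    rw [Real.dist_eq, Real.dist_eq, Real.coe_toNNReal M hM0, add_sub_cancel_left] at h1
    linarith [(abs_le.1 h1).1]
  have hcont : Continuous f := hf.continuous
  have hI0 : (∫ t in (x0 - π)..(x0 + π), f t) = 0 := by
    have h2 := hper.intervalIntegral_add_eq (x0 - π) (-π)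
    rw [show x0 - π + 2 * π = x0 + π by ring, show -π + 2 * π = π by ring] at h2
    rw [h2, hint]
  have hI1 : (∫ t in (-π)..π, f (x0 + t)) = 0 := by
    rw [intervalIntegral.integral_comp_add_left f x0, show x0 + -π = x0 - π by ring]
    exact hI0
  have hmono : (∫ t in (-π)..π, (f x0 - M * |t|)) ≤ ∫ t in (-π)..π, f (x0 + t) := by
    apply intervalIntegral.integral_mono_on (by linarith [pi_pos])
    · exact (continuous_const.sub (continuous_const.mul continuous_abs)).intervalIntegrable _ _
    · exact (hcont.comp (continuous_const.add continuous_id)).intervalIntegrable _ _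
    · intro x _
      exact hbound x
  rw [hI1] at hmono
  have hcomp : (∫ t in (-π)..π, (f x0 - M * |t|)) = 2 * π * f x0 - M * π ^ 2 := by
    rw [intervalIntegral.integral_sub (f := fun _ => f x0) (g := fun t => M * |t|) (intervalIntegrable_const)
      ((continuous_const.mul continuous_abs).intervalIntegrable _ _),
      intervalIntegral.integral_const_mul, bf_habs, intervalIntegral.integral_const,
      smul_eq_mul]
    ring
  rw [hcomp] at hmono
  nlinarith [pi_pos]

lemma bf_part1 (f : ℝ → ℝ) (hper : Function.Periodic f (2 * Real.pi)) (hf : ContDiff ℝ 1 f)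
    (hint : (∫ t in (-Real.pi)..Real.pi, f t) = 0) :
    (⨆ x : ℝ, |f x|) ≤ (Real.pi / 2) * ⨆ x : ℝ, |deriv f x| := by
  have hdper : Function.Periodic (deriv f) (2 * π) := by
    intro x
    rw [← deriv_comp_add_const f (2 * π) x]
    congr 1
    funext y
    exact hper y
  have hdcont : Continuous (deriv f) := hf.continuous_deriv le_rfl
  obtain ⟨C, hC⟩ := bf_bdd hdper hdcont
  have hbdd : BddAbove (Set.range fun x => |deriv f x|) := by
    refine ⟨C, ?_⟩
    rintro _ ⟨x, rfl⟩
    exact hC x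
  set M : ℝ := ⨆ x : ℝ, |deriv f x| with hMdef
  have hM : ∀ x, |deriv f x| ≤ M := fun x => le_ciSup hbdd x
  have hM0 : 0 ≤ M := le_trans (abs_nonneg _) (hM 0)
  apply ciSup_le
  intro x
  rw [abs_le]
  constructor
  · have hneg : (fun y => -f y) x ≤ π / 2 * M := by
      apply bf_key (f := fun y => -f y) (fun y => by simp [hper y]) (hf.neg) _ hM0 _ x
      · rw [intervalIntegral.integral_neg, hint, neg_zero]
      · intro y
        rw [deriv.fun_neg, abs_neg]
        exact hM y
    simp only at hneg
    linarith
  · exact bf_key hper hf hint hM0 hM x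

def bfS : Set ℝ := Set.range fun k : ℤ => 2 * π * k

def bfT (x : ℝ) : ℝ := π / 2 - infDist x bfS

lemma bfS_ne : bfS.Nonempty := ⟨0, ⟨0, by simp⟩⟩

lemma bfT_lip : LipschitzWith 1 bfT := by
  apply LipschitzWith.of_dist_le_mul
  intro a b
  have h := (lipschitz_infDist_pt bfS).dist_le_mul a b
  rw [Real.dist_eq, Real.dist_eq] at *
  rw [show bfT a - bfT b = -(infDist a bfS - infDist b bfS) by unfold bfT; ring, abs_neg]
  simpa using h

lemma bfT_per : Function.Periodic bfT (2 * π) := by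
  have key : ∀ (x t : ℝ), (∀ y ∈ bfS, y + t ∈ bfS) → infDist (x + t) bfS ≤ infDist x bfS := by
    intro x t hS
    by_contra h
    push_neg at h
    obtain ⟨y, hy, hlt⟩ := (infDist_lt_iff bfS_ne).1 h
    have h2 : infDist (x + t) bfS ≤ dist (x + t) (y + t) := infDist_le_dist_of_mem (hS y hy)
    rw [Real.dist_eq, add_sub_add_right_eq_sub, ← Real.dist_eq] at h2
    linarith
  intro x
  have hfwd : ∀ y ∈ bfS, y + 2 * π ∈ bfS := by
    rintro _ ⟨k, rfl⟩
    exact ⟨k + 1, by push_cast; ring⟩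
  have hbwd : ∀ y ∈ bfS, y + -(2 * π) ∈ bfS := by
    rintro _ ⟨k, rfl⟩
    exact ⟨k - 1, by push_cast; ring⟩
  have h1 := key x (2 * π) hfwd
  have h2 := key (x + 2 * π) (-(2 * π)) hbwd
  rw [add_neg_cancel_right] at h2
  simp only [bfT]
  linarith

lemma bfT_eq_on (x : ℝ) (hx : x ∈ Set.Icc (-π) π) : bfT x = π / 2 - |x| := by
  have hle : infDist x bfS ≤ |x| := by
    have := infDist_le_dist_of_mem (x := x) (show (0:ℝ) ∈ bfS from ⟨0, by simp⟩)
    rwa [Real.dist_eq, sub_zero] at this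
  have hge : |x| ≤ infDist x bfS := by
    by_contra h
    push_neg at h
    obtain ⟨y, ⟨k, rfl⟩, hlt⟩ := (infDist_lt_iff bfS_ne).1 h
    rw [Real.dist_eq] at hlt
    have habs : |x| ≤ π := abs_le.2 ⟨hx.1, hx.2⟩
    rcases eq_or_ne k 0 with rfl | hk
    · simp at hlt
    · have h1 : (1:ℝ) ≤ |(k:ℝ)| := by exact_mod_cast Int.one_le_abs hk
      have h2 : 2 * π ≤ |2 * π * k| := by
        rw [abs_mul, abs_of_nonneg (by positivity : (0:ℝ) ≤ 2 * π)]
        nlinarith [pi_pos]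
      have h3 : |2 * π * k| - |x| ≤ |x - 2 * π * k| := by
        have := abs_sub_abs_le_abs_sub (2 * π * (k:ℝ)) x
        rw [abs_sub_comm] at this
        linarith
      linarith [pi_pos]
  unfold bfT
  linarith

lemma bfT_infDist_le_pi (x : ℝ) : infDist x bfS ≤ π := by
  have h1 : infDist x bfS ≤ dist x (2 * π * round (x / (2 * π))) :=
    infDist_le_dist_of_mem ⟨round (x / (2 * π)), rfl⟩
  have h2 : dist x (2 * π * round (x / (2 * π))) ≤ π := by
    rw [Real.dist_eq]
    have hne : (2 * π) ≠ 0 := by positivity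
    have : x - 2 * π * round (x / (2 * π)) = 2 * π * (x / (2 * π) - round (x / (2 * π))) := by
      field_simp
    rw [this, abs_mul, abs_of_nonneg (by positivity : (0:ℝ) ≤ 2 * π)]
    have := abs_sub_round (x / (2 * π))
    nlinarith [pi_pos]
  linarith

lemma bfT_abs_le (x : ℝ) : |bfT x| ≤ π / 2 := by
  rw [abs_le]
  unfold bfT
  constructor
  · linarith [bfT_infDist_le_pi x]
  · linarith [infDist_nonneg (x := x) (s := bfS)]

lemma bfT_zero : bfT 0 = π / 2 := by
  unfold bfT
  rw [infDist_zero_of_mem (show (0:ℝ) ∈ bfS from ⟨0, by simp⟩), sub_zero]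

lemma bfT_cont : Continuous bfT := bfT_lip.continuous


lemma bfT_int : (∫ t in (-π)..π, bfT t) = 0 := by
  rw [intervalIntegral.integral_congr (g := fun x => π / 2 - |x|)
    (fun x hx => bfT_eq_on x (by rwa [Set.uIcc_of_le (by linarith [pi_pos] : -π ≤ π)] at hx)),
    intervalIntegral.integral_sub intervalIntegrable_const (continuous_abs.intervalIntegrable _ _),
    bf_habs, intervalIntegral.integral_const, smul_eq_mul]
  ring


variable (b : ContDiffBump (0:ℝ))

def bff : ℝ → ℝ := (b.normed volume) ⋆[ContinuousLinearMap.lsmul ℝ ℝ] bfT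

lemma bff_contDiff : ContDiff ℝ 1 (bff b) :=
  b.hasCompactSupport_normed.contDiff_convolution_left _ b.contDiff_normed
    (bfT_cont.locallyIntegrable)

lemma bff_eq (x : ℝ) : bff b x = ∫ t, b.normed volume t * bfT (x - t) := by
  simp [bff, convolution_def, smul_eq_mul]

lemma bff_integrable (x : ℝ) : Integrable (fun t => b.normed volume t * bfT (x - t)) := by
  apply Continuous.integrable_of_hasCompactSupport
  · exact b.continuous_normed.mul (bfT_cont.comp (continuous_const.sub continuous_id))
  · exact b.hasCompactSupport_normed.mul_right

lemma bff_per : Function.Periodic (bff b) (2 * π) := by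
  intro x
  rw [bff_eq, bff_eq]
  congr 1
  funext t
  rw [show x + 2 * π - t = (x - t) + 2 * π by ring, bfT_per (x - t)]

lemma bff_close (x : ℝ) : |bff b x - bfT x| ≤ b.rOut := by
  have hTx : bfT x = ∫ t, b.normed volume t * bfT x := by
    rw [integral_mul_const, b.integral_normed, one_mul]
  rw [bff_eq, hTx, ← integral_sub (bff_integrable b x)
    (b.integrable_normed.mul_const _)]
  have hsub : ∀ t : ℝ, b.normed volume t * bfT (x - t) - b.normed volume t * bfT x
      = b.normed volume t * (bfT (x - t) - bfT x) := fun t => by ring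
  simp_rw [hsub]
  calc |∫ t, b.normed volume t * (bfT (x - t) - bfT x)|
      ≤ ∫ t, |b.normed volume t * (bfT (x - t) - bfT x)| := by
        simpa only [Real.norm_eq_abs] using
          norm_integral_le_integral_norm (μ := volume) (fun t => b.normed volume t * (bfT (x - t) - bfT x))
    _ ≤ ∫ t, b.normed volume t * b.rOut := by
        apply integral_mono
        · apply Integrable.abs
          apply Continuous.integrable_of_hasCompactSupport
          · exact b.continuous_normed.mul
              ((bfT_cont.comp (continuous_const.sub continuous_id)).sub continuous_const)
          · exact b.hasCompactSupport_normed.mul_right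
        · exact b.integrable_normed.mul_const _
        · intro t
          dsimp only
          rw [abs_mul, abs_of_nonneg (b.nonneg_normed t)]
          rcases eq_or_ne (b.normed volume t) 0 with h0 | h0
          · rw [h0, zero_mul, zero_mul]
          · have ht : t ∈ Metric.ball (0:ℝ) b.rOut := by
              rw [← b.support_normed_eq (μ := volume)]
              exact h0
            rw [Metric.mem_ball, Real.dist_eq, sub_zero] at ht
            apply mul_le_mul_of_nonneg_left _ (b.nonneg_normed t)
            have hl := bfT_lip.dist_le_mul (x - t) x
            rw [Real.dist_eq, Real.dist_eq, NNReal.coe_one, one_mul,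
              sub_sub_cancel_left, abs_neg] at hl
            linarith
    _ = b.rOut := by rw [integral_mul_const, b.integral_normed, one_mul]

lemma bff_lip (x y : ℝ) : |bff b x - bff b y| ≤ |x - y| := by
  rw [bff_eq, bff_eq, ← integral_sub (bff_integrable b x) (bff_integrable b y)]
  have hsub : ∀ t : ℝ, b.normed volume t * bfT (x - t) - b.normed volume t * bfT (y - t)
      = b.normed volume t * (bfT (x - t) - bfT (y - t)) := fun t => by ring
  simp_rw [hsub]
  calc |∫ t, b.normed volume t * (bfT (x - t) - bfT (y - t))|
      ≤ ∫ t, |b.normed volume t * (bfT (x - t) - bfT (y - t))| := by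
        simpa only [Real.norm_eq_abs] using
          norm_integral_le_integral_norm (μ := volume) (fun t => b.normed volume t * (bfT (x - t) - bfT (y - t)))
    _ ≤ ∫ t, b.normed volume t * |x - y| := by
        apply integral_mono
        · apply Integrable.abs
          apply Continuous.integrable_of_hasCompactSupport
          · exact b.continuous_normed.mul
              ((bfT_cont.comp (continuous_const.sub continuous_id)).sub
                (bfT_cont.comp (continuous_const.sub continuous_id)))
          · exact b.hasCompactSupport_normed.mul_right
        · exact b.integrable_normed.mul_const _
        · intro t
          dsimp only
          rw [abs_mul, abs_of_nonneg (b.nonneg_normed t)]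
          apply mul_le_mul_of_nonneg_left _ (b.nonneg_normed t)
          have hl := bfT_lip.dist_le_mul (x - t) (y - t)
          rw [Real.dist_eq, Real.dist_eq, NNReal.coe_one, one_mul,
            sub_sub_sub_cancel_right] at hl
          exact hl
    _ = |x - y| := by rw [integral_mul_const, b.integral_normed, one_mul]

lemma bff_deriv_le (x : ℝ) : |deriv (bff b) x| ≤ 1 := by
  have := norm_deriv_le_of_lip' (f := bff b) (x₀ := x) zero_le_one
    (Filter.Eventually.of_forall fun y => by
      simpa [Real.norm_eq_abs, abs_sub_comm] using bff_lip b y x)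
  simpa using this

lemma bf_part2 (c : ℝ) (hc : c < Real.pi / 2) :
    ∃ f : ℝ → ℝ, Function.Periodic f (2 * Real.pi) ∧ ContDiff ℝ 1 f ∧
      (∫ t in (-Real.pi)..Real.pi, f t) = 0 ∧
      (⨆ x : ℝ, |f x|) > c * ⨆ x : ℝ, |deriv f x| := by
  set m0 : ℝ := max c 0 with hm0def
  have hm0 : m0 < π / 2 := max_lt hc (by linarith [pi_pos])
  set ε : ℝ := (π / 2 - m0) / 4 with hεdef
  have hε : 0 < ε := by simp only [hεdef]; linarith
  set b : ContDiffBump (0:ℝ) := ⟨ε / 2, ε, by linarith, by linarith⟩ with hbdef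
  have hrOut : b.rOut = ε := rfl
  set f : ℝ → ℝ := bff b with hfdef
  have hfcont : Continuous f := (bff_contDiff b).continuous
  have hIf : |∫ t in (-π)..π, f t| ≤ ε * (2 * π) := by
    have h1 : (∫ t in (-π)..π, f t) = ∫ t in (-π)..π, (f t - bfT t) := by
      rw [intervalIntegral.integral_sub (hfcont.intervalIntegrable _ _)
        (bfT_cont.intervalIntegrable _ _), bfT_int, sub_zero]
    rw [h1]
    have h2 := intervalIntegral.norm_integral_le_of_norm_le_const (C := ε)
      (f := fun t => f t - bfT t) (a := -π) (b := π)
      (fun x _ => by simpa [Real.norm_eq_abs, hrOut] using bff_close b x)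
    rw [Real.norm_eq_abs, show |π - -π| = 2 * π by
      rw [abs_of_nonneg (by linarith [pi_pos])]; ring] at h2
    linarith
  set m : ℝ := (∫ t in (-π)..π, f t) / (2 * π) with hmdef
  have hm : |m| ≤ ε := by
    rw [hmdef, abs_div, abs_of_nonneg (by linarith [pi_pos] : (0:ℝ) ≤ 2 * π)]
    rw [div_le_iff₀ (by linarith [pi_pos])]
    linarith
  refine ⟨fun x => f x - m, fun x => by simp [hfdef, bff_per b x], (bff_contDiff b).sub
    contDiff_const, ?_, ?_⟩
  · rw [intervalIntegral.integral_sub (hfcont.intervalIntegrable _ _)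
      intervalIntegrable_const, intervalIntegral.integral_const, smul_eq_mul, hmdef]
    field_simp
    ring
  · have hderiv : ∀ x, deriv (fun y => f y - m) x = deriv f x := fun x =>
      deriv_sub_const _
    have hbdd_d : BddAbove (Set.range fun x => |deriv (fun y => f y - m) x|) := by
      refine ⟨1, ?_⟩
      rintro _ ⟨x, rfl⟩
      dsimp only
      rw [hderiv x]
      exact bff_deriv_le b x
    have hsup_d : (⨆ x : ℝ, |deriv (fun y => f y - m) x|) ≤ 1 := by
      apply ciSup_le
      intro x
      rw [hderiv x]
      exact bff_deriv_le b x
    have hsup_d0 : 0 ≤ ⨆ x : ℝ, |deriv (fun y => f y - m) x| :=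
      le_trans (abs_nonneg _) (le_ciSup hbdd_d 0)
    have hbdd_g : BddAbove (Set.range fun x => |f x - m|) := by
      refine ⟨π / 2 + 2 * ε, ?_⟩
      rintro _ ⟨x, rfl⟩
      dsimp only
      have h1 := bff_close b x
      rw [hrOut] at h1
      have h2 := bfT_abs_le x
      have := abs_le.1 h1
      have := abs_le.1 h2
      have := abs_le.1 hm
      rw [abs_le]
      constructor <;> linarith
    have hg0 : π / 2 - 2 * ε ≤ |f 0 - m| := by
      have h1 := bff_close b 0
      rw [hrOut, bfT_zero] at h1
      have h1' := (abs_le.1 h1).1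
      have h2 := (abs_le.1 hm).2
      calc π / 2 - 2 * ε ≤ f 0 - m := by linarith
        _ ≤ |f 0 - m| := le_abs_self _
    have hsup_g : π / 2 - 2 * ε ≤ ⨆ x : ℝ, |f x - m| :=
      le_trans hg0 (le_ciSup hbdd_g 0)
    have hfinal : c * (⨆ x : ℝ, |deriv (fun y => f y - m) x|) ≤ m0 := by
      rcases le_or_gt 0 c with h | h
      · calc c * (⨆ x : ℝ, |deriv (fun y => f y - m) x|) ≤ c * 1 :=
            mul_le_mul_of_nonneg_left hsup_d h
          _ = c := mul_one c
          _ ≤ m0 := le_max_left c 0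
      · calc c * (⨆ x : ℝ, |deriv (fun y => f y - m) x|) ≤ 0 :=
            mul_nonpos_of_nonpos_of_nonneg h.le hsup_d0
          _ ≤ m0 := le_max_right c 0
    have : m0 < π / 2 - 2 * ε := by simp only [hεdef]; linarith
    calc c * (⨆ x : ℝ, |deriv (fun y => f y - m) x|) ≤ m0 := hfinal
      _ < π / 2 - 2 * ε := this
      _ ≤ ⨆ x : ℝ, |f x - m| := hsup_g

end BohrFavardAux

/-- **Bohr–Favard inequality** for the first derivative.

If `f : ℝ → ℝ` is `2π`-periodic, continuously differentiable, and has zero mean over a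
period, then `sup |f| ≤ (π/2) · sup |f′|`; moreover the constant `π/2` is sharp: for any
`c < π/2` there is such a function `f` with `sup |f| > c · sup |f′|`. -/
theorem bohr_favard_first_derivative :
    (∀ f : ℝ → ℝ, Function.Periodic f (2 * Real.pi) → ContDiff ℝ 1 f →
      (∫ t in (-Real.pi)..Real.pi, f t) = 0 →
      (⨆ x : ℝ, |f x|) ≤ (Real.pi / 2) * ⨆ x : ℝ, |deriv f x|) ∧
    (∀ c : ℝ, c < Real.pi / 2 →
      ∃ f : ℝ → ℝ, Function.Periodic f (2 * Real.pi) ∧ ContDiff ℝ 1 f ∧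
        (∫ t in (-Real.pi)..Real.pi, f t) = 0 ∧
        (⨆ x : ℝ, |f x|) > c * ⨆ x : ℝ, |deriv f x|) :=
  ⟨bf_part1, bf_part2⟩
end

section
/- Let E be a linear subspace of the space of bounded uniformly continuous functions ℝ → ℂ, closed under uniform convergence and closed under translations (if f ∈ E then f(·+t) ∈ E for every t ∈ ℝ). Let A : E → E be a linear operator that commutes with translations (A(f(·+t)) = (Af)(·+t) for all f ∈ E, t ∈ ℝ) and satisfies sup|Af| ≤ a·sup|f| for all f ∈ E, where a ≥ 0. Then for every p ∈ [1,∞), every N > 0, and every f ∈ E, ‖Af‖_{p,N} ≤ a·‖f‖_{p,N}. -/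
set_option synthInstance.maxHeartbeats 1000000
set_option maxHeartbeats 1000000



open Real

noncomputable section PNAux

open MeasureTheory BoundedContinuousFunction

abbrev BB := BoundedContinuousFunction ℝ ℂ

/-- The submodule of `ℝ →ᵇ ℂ` consisting of functions in `E`. -/
def EsubS (E : Submodule ℂ (ℝ → ℂ)) : Submodule ℂ BB where
  carrier := {u | ⇑u ∈ E}
  add_mem' {u v} hu hv := by
    show ⇑(u + v) ∈ E
    have : ⇑(u + v) = ⇑u + ⇑v := rfl
    rw [this]; exact E.add_mem hu hv
  zero_mem' := by
    show ⇑(0 : BB) ∈ E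
    have : ⇑(0 : BB) = (0 : ℝ → ℂ) := rfl
    rw [this]; exact E.zero_mem
  smul_mem' c u hu := by
    show ⇑(c • u) ∈ E
    have : ⇑(c • u) = c • ⇑u := rfl
    rw [this]; exact E.smul_mem c hu

theorem EsubS_closed (E : Submodule ℂ (ℝ → ℂ))
    (hclosed : ∀ (F : ℕ → ℝ → ℂ) (f : ℝ → ℂ), (∀ m, F m ∈ E) →
      TendstoUniformly F f Filter.atTop → f ∈ E) :
    IsClosed ((EsubS E : Set BB)) := by
  refine IsSeqClosed.isClosed ?_
  intro F u hF hFu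
  exact hclosed (fun n => ⇑(F n)) ⇑u hF
    (BoundedContinuousFunction.tendsto_iff_tendstoUniformly.mp hFu)

variable (E : Submodule ℂ (ℝ → ℂ))
  (hbdd : ∀ f ∈ E, ∃ M : ℝ, ∀ x : ℝ, ‖f x‖ ≤ M)
  (huc : ∀ f ∈ E, UniformContinuous f)

/-- Bundle a member of `E` as an element of `EsubS E`. -/
def bundleE (g : ℝ → ℂ) (hg : g ∈ E) : EsubS E :=
  ⟨BoundedContinuousFunction.ofNormedAddCommGroup g (huc g hg).continuous
      (Classical.choose (hbdd g hg)) (Classical.choose_spec (hbdd g hg)), hg⟩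

@[simp] theorem coe_bundleE (g : ℝ → ℂ) (hg : g ∈ E) :
    ⇑((bundleE E hbdd huc g hg : EsubS E) : BB) = g := rfl


theorem memE (u : EsubS E) : ⇑(u : BB) ∈ E := u.2

variable (A : (ℝ → ℂ) → (ℝ → ℂ))
  (hmaps : ∀ f ∈ E, A f ∈ E)
  (hadd : ∀ f ∈ E, ∀ g ∈ E, A (f + g) = A f + A g)
  (hsmul : ∀ (c : ℂ), ∀ f ∈ E, A (c • f) = c • A f)

/-- `A` as a linear map on `EsubS E`. -/
def AbarLin : EsubS E →ₗ[ℂ] EsubS E where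
  toFun u := bundleE E hbdd huc (A ⇑(u : BB)) (hmaps _ (memE E u))
  map_add' u v := by
    apply Subtype.ext
    apply BoundedContinuousFunction.ext
    intro y
    have h1 : ⇑(((u + v : EsubS E) : BB)) = ⇑(u : BB) + ⇑(v : BB) := rfl
    show A ⇑(((u + v : EsubS E) : BB)) y = _
    rw [h1, hadd _ (memE E u) _ (memE E v)]
    rfl
  map_smul' c u := by
    apply Subtype.ext
    apply BoundedContinuousFunction.ext
    intro y
    have h1 : ⇑(((c • u : EsubS E) : BB)) = c • ⇑(u : BB) := rfl
    show A ⇑(((c • u : EsubS E) : BB)) y = _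
    rw [h1, hsmul c _ (memE E u)]
    rfl

theorem AbarLin_norm (a : ℝ)
    (hbound : ∀ f ∈ E, (⨆ x : ℝ, ‖A f x‖) ≤ a * ⨆ x : ℝ, ‖f x‖) (u : EsubS E) :
    ‖AbarLin E hbdd huc A hmaps hadd hsmul u‖ ≤ a * ‖u‖ := by
  have h0 : ‖AbarLin E hbdd huc A hmaps hadd hsmul u‖
      = ‖((AbarLin E hbdd huc A hmaps hadd hsmul u : EsubS E) : BB)‖ := rfl
  have h1 : ‖u‖ = ‖(u : BB)‖ := rfl
  rw [h0, h1, norm_eq_iSup_norm, norm_eq_iSup_norm]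
  exact hbound _ (memE E u)

/-- `A` as a continuous linear map on `EsubS E`. -/
def AbarL (a : ℝ)
    (hbound : ∀ f ∈ E, (⨆ x : ℝ, ‖A f x‖) ≤ a * ⨆ x : ℝ, ‖f x‖) : EsubS E →L[ℂ] EsubS E :=
  LinearMap.mkContinuous (AbarLin E hbdd huc A hmaps hadd hsmul) a
    (AbarLin_norm E hbdd huc A hmaps hadd hsmul a hbound)

@[simp] theorem coe_AbarL (a : ℝ)
    (hbound : ∀ f ∈ E, (⨆ x : ℝ, ‖A f x‖) ≤ a * ⨆ x : ℝ, ‖f x‖) (u : EsubS E) :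
    ⇑((AbarL E hbdd huc A hmaps hadd hsmul a hbound u : EsubS E) : BB) = A ⇑(u : BB) := rfl

theorem AbarL_bound (a : ℝ)
    (hbound : ∀ f ∈ E, (⨆ x : ℝ, ‖A f x‖) ≤ a * ⨆ x : ℝ, ‖f x‖) (u : EsubS E) :
    ‖AbarL E hbdd huc A hmaps hadd hsmul a hbound u‖ ≤ a * ‖u‖ :=
  AbarLin_norm E hbdd huc A hmaps hadd hsmul a hbound u

variable (htrans : ∀ f ∈ E, ∀ t : ℝ, (fun x => f (x + t)) ∈ E)
  (f : ℝ → ℂ) (hf : f ∈ E)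

/-- The translation of `f` by `t`, as an element of `EsubS E`. -/
def tauE (t : ℝ) : EsubS E :=
  bundleE E hbdd huc (fun y => f (y + t)) (htrans f hf t)

theorem tauE_cont : Continuous (tauE E hbdd huc htrans f hf) := by
  rw [Metric.continuous_iff]
  intro t ε hε
  obtain ⟨δ, hδ, hδ'⟩ := Metric.uniformContinuous_iff.mp (huc f hf) (ε / 2) (half_pos hε)
  refine ⟨δ, hδ, fun s hs => ?_⟩
  have : dist (tauE E hbdd huc htrans f hf s) (tauE E hbdd huc htrans f hf t)
      = dist ((tauE E hbdd huc htrans f hf s : EsubS E) : BB)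
        ((tauE E hbdd huc htrans f hf t : EsubS E) : BB) := rfl
  rw [this]
  have hle : dist ((tauE E hbdd huc htrans f hf s : EsubS E) : BB)
      ((tauE E hbdd huc htrans f hf t : EsubS E) : BB) ≤ ε / 2 := by
    rw [BoundedContinuousFunction.dist_le (half_pos hε).le]
    intro y
    have : dist (y + s) (y + t) < δ := by
      simpa [Real.dist_eq, add_sub_add_left_eq_sub] using hs
    exact (hδ' this).le
  linarith [hle]

end PNAux

/-- The norm `‖f‖_{p,N} = sup_{x∈ℝ} (∫_{x−N}^{x+N} |f(t)|^p dt)^{1/p}`. -/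
noncomputable def pNNorm (p N : ℝ) (f : ℝ → ℂ) : ℝ :=
  ⨆ x : ℝ, (∫ t in (x - N)..(x + N), ‖f t‖ ^ p) ^ (1 / p)

section Key

open MeasureTheory BoundedContinuousFunction

theorem key_estimate
    (E : Submodule ℂ (ℝ → ℂ))
    (hbdd : ∀ f ∈ E, ∃ M : ℝ, ∀ x : ℝ, ‖f x‖ ≤ M)
    (huc : ∀ f ∈ E, UniformContinuous f)
    (hclosed : ∀ (F : ℕ → ℝ → ℂ) (f : ℝ → ℂ), (∀ m, F m ∈ E) →
      TendstoUniformly F f Filter.atTop → f ∈ E)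
    (htrans : ∀ f ∈ E, ∀ t : ℝ, (fun x => f (x + t)) ∈ E)
    (A : (ℝ → ℂ) → (ℝ → ℂ))
    (hmaps : ∀ f ∈ E, A f ∈ E)
    (hadd : ∀ f ∈ E, ∀ g ∈ E, A (f + g) = A f + A g)
    (hsmul : ∀ (c : ℂ), ∀ f ∈ E, A (c • f) = c • A f)
    (hcomm : ∀ f ∈ E, ∀ t : ℝ, A (fun x => f (x + t)) = fun x => A f (x + t))
    (a : ℝ) (ha : 0 ≤ a)
    (hbound : ∀ f ∈ E, (⨆ x : ℝ, ‖A f x‖) ≤ a * ⨆ x : ℝ, ‖f x‖)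
    (p : ℝ) (hp : 1 ≤ p) (N : ℝ) (hN : 0 < N) (f : ℝ → ℂ) (hf : f ∈ E) (x : ℝ) :
    (∫ t in Set.Ioc (x - N) (x + N), ‖A f t‖ ^ p) ^ (1 / p) ≤ a * pNNorm p N f := by
  have hp0 : 0 < p := lt_of_lt_of_le one_pos hp
  set P := pNNorm p N f with hP
  set Af := A f with hAf
  have hAfE : Af ∈ E := hmaps f hf
  have hAfc : Continuous Af := (huc Af hAfE).continuous
  have hfc : Continuous f := (huc f hf).continuous
  obtain ⟨M, hM⟩ := hbdd f hf
  obtain ⟨MA, hMA⟩ := hbdd Af hAfE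
  set Mf := max M 1 with hMf
  set CA := max MA 1 with hCA
  have hMf1 : (1:ℝ) ≤ Mf := le_max_right _ _
  have hCA1 : (1:ℝ) ≤ CA := le_max_right _ _
  have hMfb : ∀ t, ‖f t‖ ≤ Mf := fun t => (hM t).trans (le_max_left _ _)
  have hCAb : ∀ t, ‖Af t‖ ≤ CA := fun t => (hMA t).trans (le_max_left _ _)
  -- the set over which we integrate
  set I : Set ℝ := Set.Ioc (x - N) (x + N) with hI
  have hIm : MeasurableSet I := measurableSet_Ioc
  haveI : IsFiniteMeasure (volume.restrict I) :=
    ⟨by rw [Measure.restrict_apply_univ]; exact measure_Ioc_lt_top⟩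
  -- nonnegativity and boundedness of P
  have hPrangeBdd : BddAbove (Set.range fun z : ℝ =>
      (∫ t in (z - N)..(z + N), ‖f t‖ ^ p) ^ (1 / p)) := by
    refine ⟨(Mf ^ p * (2 * N)) ^ (1 / p), ?_⟩
    rintro w ⟨z, rfl⟩
    have h1 : ‖∫ t in (z - N)..(z + N), ‖f t‖ ^ p‖ ≤ Mf ^ p * |(z + N) - (z - N)| := by
      refine intervalIntegral.norm_integral_le_of_norm_le_const fun t _ => ?_
      rw [Real.norm_eq_abs, abs_of_nonneg (Real.rpow_nonneg (norm_nonneg _) p)]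
      exact Real.rpow_le_rpow (norm_nonneg _) (hMfb t) hp0.le
    have h2 : |(z + N) - (z - N)| = 2 * N := by
      rw [show (z + N) - (z - N) = 2 * N by ring, abs_of_nonneg (by linarith)]
    have h3 : (∫ t in (z - N)..(z + N), ‖f t‖ ^ p) ≤ Mf ^ p * (2 * N) := by
      calc (∫ t in (z - N)..(z + N), ‖f t‖ ^ p)
          ≤ ‖∫ t in (z - N)..(z + N), ‖f t‖ ^ p‖ := Real.le_norm_self _
        _ ≤ Mf ^ p * |(z + N) - (z - N)| := h1
        _ = Mf ^ p * (2 * N) := by rw [h2]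
    exact Real.rpow_le_rpow (intervalIntegral.integral_nonneg (by linarith)
      (fun t _ => Real.rpow_nonneg (norm_nonneg _) p)) h3 (by positivity)
  have hPle : ∀ z : ℝ, (∫ t in (z - N)..(z + N), ‖f t‖ ^ p) ^ (1 / p) ≤ P :=
    fun z => le_ciSup hPrangeBdd z
  have hPnonneg : 0 ≤ P := by
    refine le_trans ?_ (hPle 0)
    exact Real.rpow_nonneg (intervalIntegral.integral_nonneg (by linarith)
      (fun t _ => Real.rpow_nonneg (norm_nonneg _) p)) _
  -- the value J
  set J : ℝ := ∫ t in I, ‖Af t‖ ^ p with hJ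
  have hJnonneg : 0 ≤ J :=
    integral_nonneg (fun t => Real.rpow_nonneg (norm_nonneg _) p)
  rcases eq_or_lt_of_le hJnonneg with hJ0 | hJpos
  · rw [← hJ0, Real.zero_rpow (by positivity)]
    positivity
  -- the dual function g
  set g : ℝ → ℂ := fun t => (starRingEnd ℂ) (Af t) * ((‖Af t‖ ^ (p - 1) / ‖Af t‖ : ℝ) : ℂ)
    with hg
  have hgmeas : Measurable g := by
    have h1 : Measurable fun t => (starRingEnd ℂ) (Af t) := by
      simp only [starRingEnd_apply]
      exact (continuous_star.comp hAfc).measurable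
    have hc : Continuous fun s : ℝ => s ^ (p - 1) :=
      continuous_iff_continuousAt.mpr fun s =>
        Real.continuousAt_rpow_const s (p - 1) (Or.inr (by linarith))
    have h2 : Measurable fun t => (‖Af t‖ ^ (p - 1) / ‖Af t‖ : ℝ) :=
      ((hc.comp hAfc.norm).measurable).div hAfc.norm.measurable
    exact h1.mul (Complex.measurable_ofReal.comp h2)
  have hgnorm : ∀ t, Af t ≠ 0 → ‖g t‖ = ‖Af t‖ ^ (p - 1) := by
    intro t ht
    have hx : 0 < ‖Af t‖ := norm_pos_iff.mpr ht
    have habs : ‖((‖Af t‖ ^ (p - 1) / ‖Af t‖ : ℝ) : ℂ)‖ = ‖Af t‖ ^ (p - 1) / ‖Af t‖ := by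
      rw [Complex.norm_real, Real.norm_eq_abs, abs_of_nonneg (by positivity)]
    show ‖(starRingEnd ℂ) (Af t) * ((‖Af t‖ ^ (p - 1) / ‖Af t‖ : ℝ) : ℂ)‖ = ‖Af t‖ ^ (p - 1)
    rw [norm_mul, habs, RCLike.norm_conj, mul_comm, div_mul_cancel₀ _ hx.ne']
  have hgnorm0 : ∀ t, Af t = 0 → ‖g t‖ = 0 := by
    intro t ht; simp [hg, ht]
  have hgmul : ∀ t, g t * Af t = ((‖Af t‖ ^ p : ℝ) : ℂ) := by
    intro t
    rcases eq_or_ne (Af t) 0 with h0 | h0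
    · show (starRingEnd ℂ) (Af t) * ((‖Af t‖ ^ (p - 1) / ‖Af t‖ : ℝ) : ℂ) * Af t = _
      rw [h0]
      simp [Real.zero_rpow hp0.ne']
    · have hx : 0 < ‖Af t‖ := norm_pos_iff.mpr h0
      have hreal : (‖Af t‖ ^ (p - 1) / ‖Af t‖) * ‖Af t‖ ^ 2 = ‖Af t‖ ^ p := by
        have e2 : ‖Af t‖ ^ (p - 1) * ‖Af t‖ = ‖Af t‖ ^ p := by
          have h3 := Real.rpow_add hx (p - 1) 1
          rw [Real.rpow_one] at h3
          rw [← h3]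
          norm_num
        rw [sq, ← mul_assoc, div_mul_cancel₀ _ hx.ne', e2]
      show (starRingEnd ℂ) (Af t) * ((‖Af t‖ ^ (p - 1) / ‖Af t‖ : ℝ) : ℂ) * Af t = _
      rw [mul_comm ((starRingEnd ℂ) (Af t)) _, mul_assoc, ← Complex.normSq_eq_conj_mul_self,
        ← Complex.ofReal_mul]
      congr 1
      rw [Complex.normSq_eq_norm_sq]
      exact hreal
  have hgb : ∀ t, ‖g t‖ ≤ CA ^ (p - 1) := by
    intro t
    rcases eq_or_ne (Af t) 0 with h0 | h0
    · rw [hgnorm0 t h0]; positivity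
    · rw [hgnorm t h0]
      exact Real.rpow_le_rpow (norm_nonneg _) (hCAb t) (by linarith)
  -- the translates of f
  set τ : ℝ → EsubS E := tauE E hbdd huc htrans f hf with hτ
  have hτc : Continuous τ := tauE_cont E hbdd huc htrans f hf
  haveI : CompleteSpace (EsubS E) := (EsubS_closed E hclosed).completeSpace_coe
  set uS : ℝ → EsubS E := fun t => g t • τ t with huS
  have huSmeas : AEStronglyMeasurable uS (volume.restrict I) :=
    (hgmeas.aestronglyMeasurable).smul hτc.aestronglyMeasurable
  have hτnorm : ∀ t, ‖τ t‖ ≤ Mf := by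
    intro t
    have : ‖τ t‖ = ‖((τ t : EsubS E) : BB)‖ := rfl
    rw [this, BoundedContinuousFunction.norm_le (by linarith)]
    intro y
    show ‖f (y + t)‖ ≤ Mf
    exact hMfb _
  have huSint : Integrable uS (volume.restrict I) := by
    refine Integrable.mono' (integrable_const (CA ^ (p - 1) * Mf)) huSmeas
      (Filter.Eventually.of_forall fun t => ?_)
    have : ‖uS t‖ = ‖g t‖ * ‖τ t‖ := norm_smul (g t) (τ t)
    rw [this]
    exact mul_le_mul (hgb t) (hτnorm t) (norm_nonneg _) (by positivity)
  set hS : EsubS E := ∫ t in I, uS t with hhS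
  set Abar : EsubS E →L[ℂ] EsubS E := AbarL E hbdd huc A hmaps hadd hsmul a hbound with hAbar
  -- identify the value of (Abar hS) at 0 with J
  have hval : ((((Abar hS : EsubS E) : BB)) 0 : ℂ) = ((J : ℝ) : ℂ) := by
    set L : EsubS E →L[ℂ] ℂ :=
      ((BoundedContinuousFunction.evalCLM (𝕜 := ℂ) (0 : ℝ)).comp
        ((EsubS E).subtypeL)).comp Abar with hLdef
    have h1 : ((((Abar hS : EsubS E) : BB)) 0 : ℂ) = L hS := rfl
    rw [h1, hhS, ← ContinuousLinearMap.integral_comp_comm L huSint]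
    have h2 : ∀ t, L (uS t) = ((‖Af t‖ ^ p : ℝ) : ℂ) := by
      intro t
      have e1 : L (uS t) = g t * L (τ t) := by
        show L (g t • τ t) = _
        rw [_root_.map_smul]
        rfl
      have e2 : L (τ t) = Af t := by
        show (A (fun y => f (y + t))) 0 = Af t
        rw [hcomm f hf t]
        show Af (0 + t) = Af t
        rw [zero_add]
      rw [e1, e2, hgmul t]
    rw [integral_congr_ae (Filter.Eventually.of_forall h2)]
    have hAfpc : Continuous fun t => ‖Af t‖ ^ p :=
      (continuous_iff_continuousAt.mpr fun s =>
        Real.continuousAt_rpow_const s p (Or.inr hp0.le)).comp hAfc.norm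
    have h3 : Integrable (fun t => ‖Af t‖ ^ p) (volume.restrict I) := by
      refine Integrable.mono' (integrable_const (CA ^ p)) hAfpc.aestronglyMeasurable
        (Filter.Eventually.of_forall fun t => ?_)
      rw [Real.norm_eq_abs, abs_of_nonneg (Real.rpow_nonneg (norm_nonneg _) p)]
      exact Real.rpow_le_rpow (norm_nonneg _) (hCAb t) hp0.le
    calc ∫ t in I, ((‖Af t‖ ^ p : ℝ) : ℂ)
        = ∫ t in I, Complex.ofRealCLM (‖Af t‖ ^ p) := rfl
      _ = Complex.ofRealCLM (∫ t in I, ‖Af t‖ ^ p) :=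
          ContinuousLinearMap.integral_comp_comm _ h3
      _ = ((J : ℝ) : ℂ) := rfl
  -- sup-norm bound for hS
  -- pointwise bound for the translated integrals
  have hQ : ∀ y : ℝ, (∫ t in I, ‖f (y + t)‖ ^ p) ≤ P ^ p := by
    intro y
    have hcomp : (∫ t in I, ‖f (y + t)‖ ^ p)
        = ∫ s in ((y + x) - N)..((y + x) + N), ‖f s‖ ^ p := by
      rw [hI, ← intervalIntegral.integral_of_le (by linarith : x - N ≤ x + N)]
      rw [intervalIntegral.integral_comp_add_left (fun s => ‖f s‖ ^ p) y]
      congr 1 <;> ring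
    have hQnn : 0 ≤ ∫ s in ((y + x) - N)..((y + x) + N), ‖f s‖ ^ p :=
      intervalIntegral.integral_nonneg (by linarith)
        (fun t _ => Real.rpow_nonneg (norm_nonneg _) p)
    have hle := hPle (y + x)
    have h4 : (∫ s in ((y + x) - N)..((y + x) + N), ‖f s‖ ^ p) ≤ P ^ p := by
      have h5 : ((∫ s in ((y + x) - N)..((y + x) + N), ‖f s‖ ^ p) ^ (1/p)) ^ p ≤ P ^ p :=
        Real.rpow_le_rpow (Real.rpow_nonneg hQnn _) hle hp0.le
      calc (∫ s in ((y + x) - N)..((y + x) + N), ‖f s‖ ^ p)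
          = ((∫ s in ((y + x) - N)..((y + x) + N), ‖f s‖ ^ p) ^ (1/p)) ^ p := by
            rw [← Real.rpow_mul hQnn, one_div_mul_cancel hp0.ne', Real.rpow_one]
        _ ≤ P ^ p := h5
    rw [hcomp]
    exact h4
  -- the Hoelder-type bound
  have hHolder : ∀ y : ℝ, (∫ t in I, ‖g t‖ * ‖f (y + t)‖) ≤ J ^ (1 - 1/p) * P := by
    intro y
    have hfyc : Continuous fun t : ℝ => f (y + t) := hfc.comp (continuous_const.add continuous_id)
    rcases hp.lt_or_eq with hp1 | hp1
    · -- 1 < p : use Hoelder's inequality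
      have hpq : p.HolderConjugate (p / (p - 1)) := Real.HolderConjugate.conjExponent hp1
      set q : ℝ := p / (p - 1) with hqdef
      have hqp : q.HolderConjugate p := hpq.symm
      have hgq : ∀ t, ‖g t‖ ^ q = ‖Af t‖ ^ p := by
        intro t
        rcases eq_or_ne (Af t) 0 with h0 | h0
        · rw [hgnorm0 t h0, h0]
          rw [Real.zero_rpow hqp.ne_zero, norm_zero, Real.zero_rpow hp0.ne']
        · rw [hgnorm t h0, ← Real.rpow_mul (norm_nonneg _), hpq.sub_one_mul_conj]
      have hmemg : MemLp (fun t => ‖g t‖) (ENNReal.ofReal q) (volume.restrict I) :=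
        MemLp.of_bound hgmeas.norm.aestronglyMeasurable (CA ^ (p - 1))
          (Filter.Eventually.of_forall fun t => by rw [norm_norm]; exact hgb t)
      have hmemf : MemLp (fun t => ‖f (y + t)‖) (ENNReal.ofReal p) (volume.restrict I) :=
        MemLp.of_bound hfyc.norm.aestronglyMeasurable Mf
          (Filter.Eventually.of_forall fun t => by rw [norm_norm]; exact hMfb _)
      have hH := MeasureTheory.integral_mul_le_Lp_mul_Lq_of_nonneg hqp
        (Filter.Eventually.of_forall fun t => norm_nonneg (g t))
        (Filter.Eventually.of_forall fun t => norm_nonneg (f (y + t))) hmemg hmemf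
      have e1 : (∫ t in I, ‖g t‖ ^ q) = J := by
        rw [hJ]
        exact integral_congr_ae (Filter.Eventually.of_forall fun t => hgq t)
      have e3 : (1 : ℝ) / q = 1 - 1/p := by
        rw [one_div, ← hpq.one_sub_inv, one_div]
      have e2 : (∫ t in I, ‖f (y + t)‖ ^ p) ^ (1/p) ≤ P := by
        have hnn : 0 ≤ ∫ t in I, ‖f (y + t)‖ ^ p :=
          integral_nonneg fun t => Real.rpow_nonneg (norm_nonneg _) p
        calc (∫ t in I, ‖f (y + t)‖ ^ p) ^ (1/p)
            ≤ (P ^ p) ^ (1/p) := Real.rpow_le_rpow hnn (hQ y) (by positivity)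
          _ = P := by rw [← Real.rpow_mul hPnonneg, mul_one_div, div_self hp0.ne',
                Real.rpow_one]
      calc (∫ t in I, ‖g t‖ * ‖f (y + t)‖)
          ≤ (∫ t in I, ‖g t‖ ^ q) ^ (1/q) * (∫ t in I, ‖f (y + t)‖ ^ p) ^ (1/p) := hH
        _ = J ^ (1 - 1/p) * (∫ t in I, ‖f (y + t)‖ ^ p) ^ (1/p) := by rw [e1, e3]
        _ ≤ J ^ (1 - 1/p) * P :=
            mul_le_mul_of_nonneg_left e2 (Real.rpow_nonneg hJnonneg _)
    · -- p = 1
      have hb1 : ∀ t, ‖g t‖ ≤ 1 := by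
        intro t
        rcases eq_or_ne (Af t) 0 with h0 | h0
        · rw [hgnorm0 t h0]; norm_num
        · rw [hgnorm t h0, ← hp1]
          norm_num
      have hint1 : Integrable (fun t => ‖g t‖ * ‖f (y + t)‖) (volume.restrict I) := by
        refine Integrable.mono' (integrable_const Mf)
          (hgmeas.norm.aestronglyMeasurable.mul hfyc.norm.aestronglyMeasurable)
          (Filter.Eventually.of_forall fun t => ?_)
        rw [Real.norm_eq_abs, abs_of_nonneg (by positivity)]
        calc ‖g t‖ * ‖f (y + t)‖ ≤ 1 * Mf :=
              mul_le_mul (hb1 t) (hMfb _) (norm_nonneg _) one_pos.le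
          _ = Mf := one_mul _
      have hint2 : Integrable (fun t => ‖f (y + t)‖) (volume.restrict I) := by
        refine Integrable.mono' (integrable_const Mf) hfyc.norm.aestronglyMeasurable
          (Filter.Eventually.of_forall fun t => ?_)
        rw [norm_norm]
        exact hMfb _
      have hmono : (∫ t in I, ‖g t‖ * ‖f (y + t)‖) ≤ ∫ t in I, ‖f (y + t)‖ := by
        refine integral_mono hint1 hint2 fun t => ?_
        calc ‖g t‖ * ‖f (y + t)‖ ≤ 1 * ‖f (y + t)‖ :=
              mul_le_mul_of_nonneg_right (hb1 t) (norm_nonneg _)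
          _ = ‖f (y + t)‖ := one_mul _
      have hone : (∫ t in I, ‖f (y + t)‖) ≤ P := by
        have := hQ y
        rw [← hp1] at this
        simpa [Real.rpow_one] using this
      calc (∫ t in I, ‖g t‖ * ‖f (y + t)‖) ≤ ∫ t in I, ‖f (y + t)‖ := hmono
        _ ≤ P := hone
        _ = J ^ (1 - 1/p) * P := by
            rw [← hp1]
            norm_num
  have hhSnorm : ‖hS‖ ≤ J ^ (1 - 1/p) * P := by
    have hRHS : 0 ≤ J ^ (1 - 1/p) * P :=
      mul_nonneg (Real.rpow_nonneg hJnonneg _) hPnonneg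
    have hkey : ∀ y : ℝ, ‖(((hS : EsubS E) : BB)) y‖ ≤ J ^ (1 - 1/p) * P := by
      intro y
      set Ly : EsubS E →L[ℂ] ℂ :=
        (BoundedContinuousFunction.evalCLM (𝕜 := ℂ) y).comp ((EsubS E).subtypeL) with hLy
      have h1 : (((hS : EsubS E) : BB)) y = Ly hS := rfl
      have h2 : Ly hS = ∫ t in I, g t * f (y + t) := by
        rw [hhS, ← ContinuousLinearMap.integral_comp_comm Ly huSint]
        refine integral_congr_ae (Filter.Eventually.of_forall fun t => ?_)
        show Ly (g t • τ t) = _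
        rw [_root_.map_smul]
        rfl
      rw [h1, h2]
      calc ‖∫ t in I, g t * f (y + t)‖
          ≤ ∫ t in I, ‖g t * f (y + t)‖ := norm_integral_le_integral_norm _
        _ = ∫ t in I, ‖g t‖ * ‖f (y + t)‖ := by
            refine integral_congr_ae (Filter.Eventually.of_forall fun t => ?_)
            exact norm_mul _ _
        _ ≤ J ^ (1 - 1/p) * P := hHolder y
    have h0 : ‖hS‖ = ‖((hS : EsubS E) : BB)‖ := rfl
    rw [h0, BoundedContinuousFunction.norm_le hRHS]
    exact hkey
  -- put it together
  have hJle : J ≤ a * (J ^ (1 - 1/p) * P) := by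
    have h1 : J = ‖(((Abar hS : EsubS E) : BB) 0 : ℂ)‖ := by
      rw [hval]
      simp [Complex.norm_real, abs_of_nonneg hJnonneg]
    calc J = ‖(((Abar hS : EsubS E) : BB) 0 : ℂ)‖ := h1
      _ ≤ ‖((Abar hS : EsubS E) : BB)‖ := BoundedContinuousFunction.norm_coe_le_norm _ 0
      _ = ‖Abar hS‖ := rfl
      _ ≤ a * ‖hS‖ := AbarL_bound E hbdd huc A hmaps hadd hsmul a hbound hS
      _ ≤ a * (J ^ (1 - 1/p) * P) := by
          exact mul_le_mul_of_nonneg_left hhSnorm ha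
  -- conclude
  have hC : 0 < J ^ (1 - 1/p) := Real.rpow_pos_of_pos hJpos _
  have hsplit : J ^ (1/p) * J ^ (1 - 1/p) = J := by
    rw [← Real.rpow_add hJpos]
    norm_num
  have hstep : J ^ (1/p) * J ^ (1 - 1/p) ≤ (a * P) * J ^ (1 - 1/p) := by
    rw [hsplit]
    calc J ≤ a * (J ^ (1 - 1/p) * P) := hJle
      _ = (a * P) * J ^ (1 - 1/p) := by ring
  have hfin : J ^ (1/p) ≤ a * P := le_of_mul_le_mul_right hstep hC
  calc (∫ t in Set.Ioc (x - N) (x + N), ‖Af t‖ ^ p) ^ (1 / p) = J ^ (1/p) := by rw [hJ]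
    _ ≤ a * P := hfin

end Key

/-- If `E` is a translation-invariant linear space of bounded uniformly continuous functions
on `ℝ`, closed under uniform convergence, and `A` is a linear operator on `E` commuting with
translations with `sup|Af| ≤ a·sup|f|`, then `‖Af‖_{p,N} ≤ a·‖f‖_{p,N}` for all
`p ∈ [1,∞)`, `N > 0`. -/
theorem sup_norm_bound_implies_pN_norm_bound
    (E : Submodule ℂ (ℝ → ℂ))
    (hbdd : ∀ f ∈ E, ∃ M : ℝ, ∀ x : ℝ, ‖f x‖ ≤ M)
    (huc : ∀ f ∈ E, UniformContinuous f)
    (hclosed : ∀ (F : ℕ → ℝ → ℂ) (f : ℝ → ℂ), (∀ m, F m ∈ E) →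
      TendstoUniformly F f Filter.atTop → f ∈ E)
    (htrans : ∀ f ∈ E, ∀ t : ℝ, (fun x => f (x + t)) ∈ E)
    (A : (ℝ → ℂ) → (ℝ → ℂ))
    (hmaps : ∀ f ∈ E, A f ∈ E)
    (hadd : ∀ f ∈ E, ∀ g ∈ E, A (f + g) = A f + A g)
    (hsmul : ∀ (c : ℂ), ∀ f ∈ E, A (c • f) = c • A f)
    (hcomm : ∀ f ∈ E, ∀ t : ℝ, A (fun x => f (x + t)) = fun x => A f (x + t))
    (a : ℝ) (ha : 0 ≤ a)
    (hbound : ∀ f ∈ E, (⨆ x : ℝ, ‖A f x‖) ≤ a * ⨆ x : ℝ, ‖f x‖) :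
    ∀ p : ℝ, 1 ≤ p → ∀ N : ℝ, 0 < N → ∀ f ∈ E,
      pNNorm p N (A f) ≤ a * pNNorm p N f := by
  intro p hp N hN f hf
  have hkey := key_estimate E hbdd huc hclosed htrans A hmaps hadd hsmul hcomm a ha hbound
    p hp N hN f hf
  show (⨆ x : ℝ, (∫ t in (x - N)..(x + N), ‖A f t‖ ^ p) ^ (1 / p)) ≤ a * pNNorm p N f
  refine ciSup_le fun x => ?_
  rw [intervalIntegral.integral_of_le (by linarith : x - N ≤ x + N)]
  exact hkey x
end
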